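/- Let P_T be an n×n nonnegative matrix with row sums at most 1 and spectral radius less than 1, and define λ_T = e^T (I - P_T)^{-1} / (e^T (I - P_T)^{-1} e). Then λ_T is a stationary probability vector of the stochastic matrix Q_T := P_T + (e - P_T e) μ, where μ = e^T/n; that is, λ_T ≥ 0, λ_T e = 1, and λ_T Q_T = λ_T. -/

import Mathlib

open Matrix Filter Topology

attribute [local instance] Matrix.linftyOpNormedAddCommGroup Matrix.linftyOpNormedRing
  Matrix.linftyOpNormedAlgebra

section aux

variable {n : ℕ}

private lemma entry_norm_le (A : Matrix (Fin n) (Fin n) ℝ) (i j : Fin n) : ‖A i j‖ ≤ ‖A‖ := by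
  have h1 : ‖A i j‖₊ ≤ ∑ k, ‖A i k‖₊ :=
    Finset.single_le_sum (f := fun k => ‖A i k‖₊) (fun _ _ => zero_le) (Finset.mem_univ j)
  have h2 : (∑ k, ‖A i k‖₊) ≤ ‖A‖₊ := by
    rw [Matrix.linfty_opNNNorm_def]
    exact Finset.le_sup (f := fun i => ∑ j, ‖A i j‖₊) (Finset.mem_univ i)
  exact_mod_cast h1.trans h2

private lemma continuous_entry (i j : Fin n) :
    Continuous (fun A : Matrix (Fin n) (Fin n) ℝ => A i j) := by
  refine (LipschitzWith.of_dist_le_mul (K := 1) fun A B => ?_).continuous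
  simpa [dist_eq_norm] using entry_norm_le (A - B) i j

private lemma pow_entry_nonneg (A : Matrix (Fin n) (Fin n) ℝ) (hA : ∀ i j, 0 ≤ A i j) :
    ∀ k i j, 0 ≤ (A ^ k) i j := by
  intro k
  induction k with
  | zero => intro i j; by_cases h : i = j <;> simp [pow_zero, Matrix.one_apply, h]
  | succ m ih =>
    intro i j
    rw [pow_succ, Matrix.mul_apply]
    exact Finset.sum_nonneg fun l _ => mul_nonneg (ih i l) (hA l j)

end aux

theorem stmt1 {n : ℕ} (hn : 0 < n) (P : Matrix (Fin n) (Fin n) ℝ)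
    (hPnn : ∀ i j, 0 ≤ P i j)
    (hsub : ∀ i, ∑ j, P i j ≤ 1)
    (hρ : spectralRadius ℝ P < 1) :
    ∀ e : Fin n → ℝ, e = (fun _ => 1) →
    ∀ μ : Fin n → ℝ, μ = (n : ℝ)⁻¹ • e →
    ∀ lam : Fin n → ℝ, lam = ((e ᵥ* (1 - P)⁻¹) ⬝ᵥ e)⁻¹ • (e ᵥ* (1 - P)⁻¹) →
    ∀ Q : Matrix (Fin n) (Fin n) ℝ, Q = P + vecMulVec (e - P *ᵥ e) μ →
    (∀ j, 0 ≤ lam j) ∧ lam ⬝ᵥ e = 1 ∧ lam ᵥ* Q = lam := by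
  intro e he μ hμ lam hlam Q hQ
  haveI : CompleteSpace (Matrix (Fin n) (Fin n) ℝ) := FiniteDimensional.complete ℝ _
  -- 1 - P is a unit
  have h1spec : (1 : ℝ) ∉ spectrum ℝ P := by
    intro h
    have : (‖(1:ℝ)‖₊ : ENNReal) ≤ spectralRadius ℝ P :=
      le_iSup₂ (f := fun k (_ : k ∈ spectrum ℝ P) => (‖k‖₊ : ENNReal)) 1 h
    simp only [nnnorm_one, ENNReal.coe_one] at this
    exact absurd hρ (not_lt.mpr this)
  have hunit : IsUnit (1 - P) := by
    rw [spectrum.notMem_iff] at h1spec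
    simpa using h1spec
  have hdet : IsUnit (1 - P).det := (Matrix.isUnit_iff_isUnit_det _).mp hunit
  -- norm bound
  have hP1 : ‖P‖ ≤ 1 := by
    have : ‖P‖₊ ≤ 1 := by
      rw [Matrix.linfty_opNNNorm_def]
      refine Finset.sup_le fun i _ => ?_
      rw [← NNReal.coe_le_coe, NNReal.coe_sum, NNReal.coe_one]
      calc (∑ j, (‖P i j‖₊ : ℝ)) = ∑ j, P i j := by
            refine Finset.sum_congr rfl fun j _ => ?_
            simp [abs_of_nonneg (hPnn i j)]
        _ ≤ 1 := hsub i
    exact_mod_cast this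
  -- nonnegativity of inverse entries for 0 ≤ s < 1 via Neumann series
  have hinv_nn : ∀ s : ℝ, 0 ≤ s → s < 1 → ∀ i j,
      0 ≤ Ring.inverse (1 - s • P) i j := by
    intro s hs0 hs1 i j
    have hnorm : ‖s • P‖ < 1 := by
      rw [norm_smul, Real.norm_eq_abs, abs_of_nonneg hs0]
      calc s * ‖P‖ ≤ s * 1 := mul_le_mul_of_nonneg_left hP1 hs0
        _ < 1 := by linarith
    have hsum : HasSum (fun k : ℕ => (s • P) ^ k) (Ring.inverse (1 - s • P)) :=
      hasSum_geom_series_inverse _ hnorm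
    have hsum' : HasSum (fun k : ℕ => ((s • P) ^ k) i j)
        (Ring.inverse (1 - s • P) i j) := by
      have h := ((continuous_entry i j).tendsto _).comp hsum
      rw [HasSum]
      convert h using 1
      funext t
      simp [Function.comp, Matrix.sum_apply]
    refine hasSum_le (f := fun _ : ℕ => (0:ℝ)) (fun k => ?_) hasSum_zero hsum'
    exact pow_entry_nonneg (s • P) (fun a b => by
      simpa [Matrix.smul_apply] using mul_nonneg hs0 (hPnn a b)) k i j
  -- nonnegativity of (1 - P)⁻¹ entries by continuity
  have hBnn : ∀ i j, 0 ≤ (1 - P)⁻¹ i j := by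
    intro i j
    have hcontg : Continuous (fun s : ℝ => (1 : Matrix (Fin n) (Fin n) ℝ) - s • P) :=
      continuous_const.sub (continuous_id.smul continuous_const)
    have hcinv : ContinuousAt Ring.inverse ((1 : Matrix (Fin n) (Fin n) ℝ) - P) := by
      have := NormedRing.inverse_continuousAt hunit.unit
      rwa [hunit.unit_spec] at this
    have hg : Tendsto (fun s : ℝ => (1 : Matrix (Fin n) (Fin n) ℝ) - s • P) (𝓝 1)
        (𝓝 (1 - P)) := by
      have h := hcontg.tendsto (1:ℝ)
      simpa using h
    have hF : ContinuousAt (fun s : ℝ => Ring.inverse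
        ((1 : Matrix (Fin n) (Fin n) ℝ) - s • P) i j) 1 := by
      have h2 : Tendsto (fun s : ℝ => Ring.inverse ((1 : Matrix (Fin n) (Fin n) ℝ) - s • P))
          (𝓝 1) (𝓝 (Ring.inverse ((1 : Matrix (Fin n) (Fin n) ℝ) - P))) :=
        Filter.Tendsto.comp hcinv hg
      have h3 := ((continuous_entry i j).tendsto _).comp h2
      rw [ContinuousAt]
      convert h3 using 2
      all_goals simp
    have hu : Tendsto (fun k : ℕ => 1 - ((k : ℝ) + 2)⁻¹) atTop (𝓝 1) := by
      have h0 : Tendsto (fun k : ℕ => ((k : ℝ) + 2)⁻¹) atTop (𝓝 0) := by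
        apply Tendsto.inv_tendsto_atTop
        exact tendsto_atTop_add_const_right _ 2 tendsto_natCast_atTop_atTop
      simpa using tendsto_const_nhds.sub h0
    have hlim := hF.tendsto.comp hu
    have hval : (0:ℝ) ≤ Ring.inverse ((1 : Matrix (Fin n) (Fin n) ℝ) - (1:ℝ) • P) i j := by
      refine ge_of_tendsto hlim (Eventually.of_forall fun k => ?_)
      have hk2 : (0:ℝ) < (k : ℝ) + 2 := by positivity
      have hk3 : (0:ℝ) < ((k : ℝ) + 2)⁻¹ := by positivity
      have hk4 : ((k : ℝ) + 2)⁻¹ ≤ 1 := by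
        rw [inv_le_one_iff₀]; right; linarith
      exact hinv_nn _ (by linarith) (by linarith) i j
    rw [Matrix.nonsing_inv_eq_ringInverse]
    simpa using hval
  -- basic algebra
  set B := (1 - P)⁻¹ with hB
  have hBmul : B * (1 - P) = 1 := Matrix.nonsing_inv_mul _ hdet
  obtain ⟨y, hy⟩ : ∃ y, y = e ᵥ* B := ⟨_, rfl⟩
  have hynn : ∀ j, 0 ≤ y j := by
    intro j
    rw [hy, he]
    simp only [Matrix.vecMul, dotProduct, one_mul]
    exact Finset.sum_nonneg fun i _ => hBnn i j
  have hyP : y ᵥ* (1 - P) = e := by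
    rw [hy, Matrix.vecMul_vecMul, hBmul, Matrix.vecMul_one]
  obtain ⟨c, hc⟩ : ∃ c, c = y ⬝ᵥ e := ⟨_, rfl⟩
  have hPe_nn : ∀ j, 0 ≤ (P *ᵥ e) j := by
    intro j
    rw [he]
    simp only [Matrix.mulVec, dotProduct, mul_one]
    exact Finset.sum_nonneg fun k _ => hPnn j k
  have hee : e ⬝ᵥ e = (n : ℝ) := by
    simp [he, dotProduct]
  have hcn : c = (n : ℝ) + y ⬝ᵥ (P *ᵥ e) := by
    have h : (y ᵥ* (1 - P)) ⬝ᵥ e = (n : ℝ) := by rw [hyP, hee]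
    rw [Matrix.vecMul_sub, Matrix.vecMul_one, sub_dotProduct,
      ← Matrix.dotProduct_mulVec] at h
    rw [hc]
    linarith
  have hypen : 0 ≤ y ⬝ᵥ (P *ᵥ e) := by
    simp only [dotProduct]
    exact Finset.sum_nonneg fun i _ => mul_nonneg (hynn i) (hPe_nn i)
  have hnpos : (0:ℝ) < n := by exact_mod_cast hn
  have hcpos : 0 < c := by rw [hcn]; linarith
  have hlam' : lam = c⁻¹ • y := by rw [hlam, ← hy, ← hc]
  refine ⟨?_, ?_, ?_⟩
  · intro j
    rw [hlam']
    simp only [Pi.smul_apply, smul_eq_mul]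
    exact mul_nonneg (inv_nonneg.mpr hcpos.le) (hynn j)
  · rw [hlam', smul_dotProduct, ← hc, smul_eq_mul, inv_mul_cancel₀ hcpos.ne']
  · have hlamsub : lam ᵥ* (1 - P) = c⁻¹ • e := by
      rw [hlam', Matrix.smul_vecMul, hyP]
    have hlamP : lam ᵥ* P = lam - c⁻¹ • e := by
      rw [eq_sub_iff_add_eq, ← hlamsub, Matrix.vecMul_sub, Matrix.vecMul_one]
      abel
    have hlamdot : lam ⬝ᵥ e = 1 := by
      rw [hlam', smul_dotProduct, ← hc, smul_eq_mul, inv_mul_cancel₀ hcpos.ne']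
    have hvmv : lam ᵥ* vecMulVec (e - P *ᵥ e) μ = (lam ⬝ᵥ (e - P *ᵥ e)) • μ := by
      funext j
      simp only [Matrix.vecMul, dotProduct, Matrix.vecMulVec_apply, Pi.smul_apply,
        smul_eq_mul, Finset.sum_mul]
      exact Finset.sum_congr rfl fun i _ => by ring
    have hdu : lam ⬝ᵥ (e - P *ᵥ e) = c⁻¹ * n := by
      rw [dotProduct_sub, hlamdot, Matrix.dotProduct_mulVec, hlamP,
        sub_dotProduct, hlamdot, smul_dotProduct, hee, smul_eq_mul]
      ring
    rw [hQ, Matrix.vecMul_add, hlamP, hvmv, hdu, hμ, smul_smul]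
    have hcn' : c⁻¹ * (n:ℝ) * (n:ℝ)⁻¹ = c⁻¹ := by
      rw [mul_assoc, mul_inv_cancel₀ hnpos.ne', mul_one]
    rw [hcn']
    abel
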